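/- arXiv:0812.4113 — 3 statements merged into one kernel-verified Lean document; each statement's English description precedes it below -/
import Mathlib

section
/- For n ≥ 2, the following identity holds in B_n(ω) ⊗_F F(u_1,…,u_n): (1 − e_{1,n}/(u_1+u_n))(1 − e_{2,n}/(u_2+u_n))⋯(1 − e_{n−1,n}/(u_{n−1}+u_n)) · ∏_{1≤i<j≤n−1}(1 − s_{ij}/(u_i−u_j)) = ∏_{1≤i<j≤n−1}(1 − s_{ij}/(u_i−u_j)) · (1 − e_{n−1,n}/(u_{n−1}+u_n))(1 − e_{n−2,n}/(u_{n−2}+u_n))⋯(1 − e_{1,n}/(u_1+u_n)), where the products over pairs (i,j) are taken in lexicographic order. -/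
/-!
Common definitions for the fusion procedure for the Brauer algebra
(Isaev–Molev, "Fusion procedure for the Brauer algebra").
-/

noncomputable section
open scoped BigOperators
open Classical

namespace BrauerFusion

/-- The base field `F = ℂ(ω)`. -/
abbrev F : Type := RatFunc ℂ

/-- The indeterminate `ω ∈ ℂ(ω)`. -/
def ωF : F := RatFunc.X

/-- `s e : ℕ → A` satisfy the defining relations of the Brauer algebra `B_n(ω)`
over the commutative base `R`; here `s i`, `e i` represent the generators
`s_i`, `e_i` for `1 ≤ i ≤ n - 1` (values at other indices are irrelevant). -/
structure IsBrauer {R : Type*} {A : Type*} [CommRing R] [Ring A] [Algebra R A]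
    (n : ℕ) (ω : R) (s e : ℕ → A) : Prop where
  ss : ∀ i, 1 ≤ i → i + 1 ≤ n → s i * s i = 1
  ee : ∀ i, 1 ≤ i → i + 1 ≤ n → e i * e i = ω • e i
  se : ∀ i, 1 ≤ i → i + 1 ≤ n → s i * e i = e i
  es : ∀ i, 1 ≤ i → i + 1 ≤ n → e i * s i = e i
  ss_comm : ∀ i j, 1 ≤ i → j + 1 ≤ n → i + 1 < j → s i * s j = s j * s i
  ee_comm : ∀ i j, 1 ≤ i → j + 1 ≤ n → i + 1 < j → e i * e j = e j * e i
  se_comm : ∀ i j, 1 ≤ i → j + 1 ≤ n → i + 1 < j → s i * e j = e j * s i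
  es_comm : ∀ i j, 1 ≤ i → j + 1 ≤ n → i + 1 < j → s j * e i = e i * s j
  braid : ∀ i, 1 ≤ i → i + 2 ≤ n → s i * s (i+1) * s i = s (i+1) * s i * s (i+1)
  eee₁ : ∀ i, 1 ≤ i → i + 2 ≤ n → e i * e (i+1) * e i = e i
  eee₂ : ∀ i, 1 ≤ i → i + 2 ≤ n → e (i+1) * e i * e (i+1) = e (i+1)
  see : ∀ i, 1 ≤ i → i + 2 ≤ n → s i * e (i+1) * e i = s (i+1) * e i
  ees : ∀ i, 1 ≤ i → i + 2 ≤ n → e (i+1) * e i * s (i+1) = e (i+1) * s i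

variable {A : Type*} [Ring A]

/-- The transposition `s_{ij} = s_i s_{i+1} ⋯ s_{j-2} s_{j-1} s_{j-2} ⋯ s_{i+1} s_i`
(for `i < j`), defined by `s_{i,i+1} = s_i` and `s_{ij} = s_i s_{i+1,j} s_i`. -/
def sij (s : ℕ → A) (i j : ℕ) : A :=
  if h : i + 1 < j then s i * sij s (i+1) j * s i else s i
termination_by j - i
decreasing_by omega

/-- The element `e_{ij} = s_{i,j-1} e_{j-1} s_{i,j-1}` (for `i < j`), with `e_{i,i+1} = e_i`. -/
def eij (s e : ℕ → A) (i j : ℕ) : A :=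
  if i + 1 < j then sij s i (j-1) * e (j-1) * sij s i (j-1) else e i

/-- `x_j^{(m)} = (ω-1)/2 + ∑_{r=1}^{j-1} (s_{rm} - e_{rm})`. -/
def jmM {R : Type*} [Field R] [Algebra R A] (ω : R) (s e : ℕ → A) (j m : ℕ) : A :=
  algebraMap R A ((ω - 1) / 2) + ∑ r ∈ Finset.Icc 1 (j-1), (sij s r m - eij s e r m)

/-- The Jucys–Murphy element `x_r = (ω-1)/2 + ∑_{k=1}^{r-1} (s_{kr} - e_{kr})`. -/
def jm {R : Type*} [Field R] [Algebra R A] (ω : R) (s e : ℕ → A) (r : ℕ) : A :=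
  jmM ω s e r r

/-- The pairs `(i, j)` with `1 ≤ i < j ≤ n` in lexicographic order. -/
def lexPairs (n : ℕ) : List (ℕ × ℕ) :=
  (List.range' 1 n).flatMap fun i =>
    ((List.range' 1 n).filter fun j => decide (i < j)).map fun j => (i, j)

/-- The rational function
`Ψ(u_1,…,u_n) = ∏_{1≤i<j≤n} (1 - e_{ij}/(u_i+u_j)) ∏_{1≤i<j≤n} (1 - s_{ij}/(u_i-u_j))`,
with ordered products over the pairs `(i,j)` in lexicographic order. -/
def Psi {K : Type*} [Field K] [Algebra K A] (s e : ℕ → A) (n : ℕ) (u : ℕ → K) : A :=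
  ((lexPairs n).map fun p => 1 - (u p.1 + u p.2)⁻¹ • eij s e p.1 p.2).prod *
  ((lexPairs n).map fun p => 1 - (u p.1 - u p.2)⁻¹ • sij s p.1 p.2).prod

/-- An updown tableau of length `n`: a sequence of Young diagrams
`Λ_0 = ∅, Λ_1, …, Λ_n` in which `Λ_r` is obtained from `Λ_{r-1}` by adding
(`add r = true`) or removing (`add r = false`) the box `box r`. -/
structure UpDownTableau (n : ℕ) where
  shape : ℕ → YoungDiagram
  box : ℕ → ℕ × ℕ
  add : ℕ → Bool
  shape_zero : shape 0 = ⊥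
  step_add : ∀ r, 1 ≤ r → r ≤ n → add r = true →
    box r ∉ shape (r-1) ∧ (shape r).cells = insert (box r) (shape (r-1)).cells
  step_rem : ∀ r, 1 ≤ r → r ≤ n → add r = false →
    box r ∉ shape r ∧ (shape (r-1)).cells = insert (box r) (shape r).cells

/-- The content `c_r` of an updown tableau: `(ω-1)/2 + j - i` if the box `(i,j)` was
added at step `r`, and `-((ω-1)/2 + j - i)` if it was removed. -/
def content {R : Type*} [Field R] (ω : R) {n : ℕ} (T : UpDownTableau n) (r : ℕ) : R :=
  if T.add r then (ω - 1) / 2 + ((T.box r).2 : R) - ((T.box r).1 : R)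
  else -((ω - 1) / 2 + ((T.box r).2 : R) - ((T.box r).1 : R))

/-- The content attached to a box `b` which can be removed from (`b ∈ μ`) or
added to (`b ∉ μ`) the diagram `μ`. -/
def boxContent {R : Type*} [Field R] (ω : R) (μ : YoungDiagram) (b : ℕ × ℕ) : R :=
  if b ∈ μ then -((ω - 1) / 2 + (b.2 : R) - (b.1 : R))
  else (ω - 1) / 2 + (b.2 : R) - (b.1 : R)

/-- All boxes `(i,j)` with `i, j < N`, listed in lexicographic order. -/
def gridList (N : ℕ) : List (ℕ × ℕ) :=
  (List.range N).flatMap fun i => (List.range N).map fun j => (i, j)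

/-- A box which can be added to, or removed from, the Young diagram `μ`
so that the result is again a Young diagram. -/
def isCandidate (μ : YoungDiagram) (b : ℕ × ℕ) : Prop :=
  (b ∉ μ ∧ ∃ ν : YoungDiagram, ν.cells = insert b μ.cells) ∨
  (b ∈ μ ∧ ∃ ν : YoungDiagram, μ.cells = insert b ν.cells)

/-- The list of all boxes which can be added to or removed from `μ`. -/
def candList (μ : YoungDiagram) : List (ℕ × ℕ) :=
  (gridList (μ.card + 2)).filter fun b => decide (isCandidate μ b)

/-- The primitive idempotent `E_{(Λ_1,…,Λ_r)}`, defined recursively by `E = 1` for `r = 0`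
and `E_T = E_U ∏_a (x_r - a)/(c_r - a)`, the product over the contents `a` of all boxes
(other than the box of step `r`) which can be added to or removed from `Λ_{r-1}`. -/
def idem {R : Type*} [Field R] [Algebra R A] (ω : R) (s e : ℕ → A) {n : ℕ}
    (T : UpDownTableau n) : ℕ → A
  | 0 => 1
  | r + 1 =>
    idem ω s e T r *
      (((candList (T.shape r)).filter (fun b => decide (b ≠ T.box (r+1)))).map fun b =>
        (content ω T (r+1) - boxContent ω (T.shape r) b)⁻¹ •
          (jm ω s e (r+1) - algebraMap R A (boxContent ω (T.shape r) b))).prod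

/-- `d_k` : the number of steps among the first `len` steps of `T` adding a box
on the diagonal `k`. -/
def dAdd {n : ℕ} (T : UpDownTableau n) (len : ℕ) (k : ℤ) : ℤ :=
  (((Finset.Icc 1 len).filter fun t =>
    T.add t = true ∧ ((T.box t).2 : ℤ) - ((T.box t).1 : ℤ) = k).card : ℤ)

/-- `d'_k` : the number of steps among the first `len` steps of `T` removing a box
on the diagonal `k`. -/
def dRem {n : ℕ} (T : UpDownTableau n) (len : ℕ) (k : ℤ) : ℤ :=
  (((Finset.Icc 1 len).filter fun t =>
    T.add t = false ∧ ((T.box t).2 : ℤ) - ((T.box t).1 : ℤ) = k).card : ℤ)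

/-- `g_k = δ_{k0} + d_{k-1} + d_{k+1} - 2 d_k`. -/
def gAdd {n : ℕ} (T : UpDownTableau n) (len : ℕ) (k : ℤ) : ℤ :=
  (if k = 0 then 1 else 0) + dAdd T len (k-1) + dAdd T len (k+1) - 2 * dAdd T len k

/-- `g'_k = d'_{k-1} + d'_{k+1} - 2 d'_k`. -/
def gRem {n : ℕ} (T : UpDownTableau n) (len : ℕ) (k : ℤ) : ℤ :=
  dRem T len (k-1) + dRem T len (k+1) - 2 * dRem T len k

/-- The diagonal `j - i` of the box of step `r`. -/
def diagOf {n : ℕ} (T : UpDownTableau n) (r : ℕ) : ℤ :=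
  ((T.box r).2 : ℤ) - ((T.box r).1 : ℤ)

/-- The exponent `p_r` of an updown tableau: `p_r = 1 - g_{k_r}` if a box is added on the
diagonal `k_r` at step `r`, and `p_r = 1 - g'_{k_r}` if a box is removed, where `g, g'`
are computed from the first `r - 1` steps. -/
def pExp {n : ℕ} (T : UpDownTableau n) (r : ℕ) : ℤ :=
  1 - (if T.add r then gAdd T (r-1) (diagOf T r) else gRem T (r-1) (diagOf T r))

/-- The factor `φ(U, T)` in the recursive definition of `f(T)`; the products over all
integers `k` are realized as products over `-r-1 ≤ k ≤ r+1`, which contains the support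
of `g` and `g'` (all other factors are equal to 1). -/
def phiStep {n : ℕ} (T : UpDownTableau n) (r : ℕ) : F :=
  if T.add r then
    (∏ k ∈ (Finset.Icc (-(r:ℤ)-1) ((r:ℤ)+1)).erase (diagOf T r),
      ((diagOf T r - k : ℤ) : F) ^ gAdd T (r-1) k) *
    ∏ k ∈ Finset.Icc (-(r:ℤ)-1) ((r:ℤ)+1),
      (((diagOf T r + k : ℤ) : F) + ωF - 1) ^ gRem T (r-1) k
  else
    (∏ k ∈ (Finset.Icc (-(r:ℤ)-1) ((r:ℤ)+1)).erase (diagOf T r),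
      ((k - diagOf T r : ℤ) : F) ^ gRem T (r-1) k) *
    ∏ k ∈ Finset.Icc (-(r:ℤ)-1) ((r:ℤ)+1),
      ((1 : F) - ωF - ((diagOf T r + k : ℤ) : F)) ^ gAdd T (r-1) k

/-- The scalar `f(T) ∈ ℂ(ω)`, defined recursively by `f(∅) = 1`, `f(T) = f(U) φ(U,T)`. -/
def fT {n : ℕ} (T : UpDownTableau n) : ℕ → F
  | 0 => 1
  | r + 1 => fT T r * phiStep T (r+1)

/-- The hook length of the box `b` in the Young diagram `μ`. -/
def hookLength (μ : YoungDiagram) (b : ℕ × ℕ) : ℕ :=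
  (μ.cells.filter fun c => c.1 = b.1 ∧ b.2 < c.2).card +
  (μ.cells.filter fun c => c.2 = b.2 ∧ b.1 < c.1).card + 1

/-- The product of the hook lengths of all boxes of `μ`. -/
def hookProd (μ : YoungDiagram) : ℕ :=
  ∏ b ∈ μ.cells, hookLength μ b

/-- Polynomials in the variables `u_1, u_2, …` over `F = ℂ(ω)`. -/
abbrev MvP : Type := MvPolynomial ℕ F

/-- The field `F(u_1, u_2, …)` of rational functions in the variables `u_r` over `ℂ(ω)`. -/
abbrev KK : Type := FractionRing MvP

/-- Substituting `u_r = c` into a polynomial in the `u`'s. -/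
def substOne (r : ℕ) (c : F) : MvP →ₐ[F] MvP :=
  MvPolynomial.aeval fun t => if t = r then MvPolynomial.C c else MvPolynomial.X t

/-- The variable `u_r` as an element of `KK`. -/
def uVar (r : ℕ) : KK := algebraMap MvP KK (MvPolynomial.X r)

/-- A constant (an element of `ℂ(ω)`) as an element of `KK`. -/
def cK (x : F) : KK := algebraMap MvP KK (MvPolynomial.C x)

/-- The element `ω` of `KK`. -/
def ωK : KK := cK ωF

/-- `RegK r c f v` : the rational function `f ∈ F(u_1, u_2, …)`, viewed as a rational
function of the variable `u_r`, is regular at `u_r = c`, with value `v` there. -/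
def RegK (r : ℕ) (c : F) (f v : KK) : Prop :=
  ∃ p q : MvP, substOne r c q ≠ 0 ∧
    f = algebraMap MvP KK p / algebraMap MvP KK q ∧
    v = algebraMap MvP KK (substOne r c p) / algebraMap MvP KK (substOne r c q)

/-- The subring of "constants": the subring generated by the `s_i`, `e_i` and the
scalars from `ℂ(ω)` (i.e. the copy of the Brauer algebra `B_n(ω)` inside `B_n(ω) ⊗ KK`). -/
def constSubK [Algebra KK A] (s e : ℕ → A) : Subring A :=
  Subring.closure (Set.range s ∪ Set.range e ∪ Set.range fun x : F => algebraMap KK A (cK x))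

/-- `RegStep s e r c a v` : the element `a` of `B ⊗ F(u_1,…,u_n)`, viewed as a rational
function of `u_r`, is regular at `u_r = c` with value `v`: it can be written as a finite sum
`a = ∑ f_i • b_i` with constant `b_i` and coordinates `f_i` regular at `u_r = c` (denominators
not vanishing at `u_r = c`), whose values at `u_r = c` give `v = ∑ f_i(c) • b_i`. -/
def RegStep [Algebra KK A] (s e : ℕ → A) (r : ℕ) (c : F) (a v : A) : Prop :=
  ∃ (m : ℕ) (f g : Fin m → KK) (b : Fin m → A),
    (∀ i, RegK r c (f i) (g i)) ∧ (∀ i, b i ∈ constSubK s e) ∧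
    a = ∑ i, f i • b i ∧ v = ∑ i, g i • b i

end BrauerFusion
namespace BrauerFusion

section Rel
variable {R : Type*} {A : Type*} [CommRing R] [Ring A] [Algebra R A]
variable {n : ℕ} {ω : R} {s e : ℕ → A} (hB : IsBrauer n ω s e)

lemma sij_succ (i : ℕ) : sij s i (i+1) = s i := by
  rw [sij]; simp

lemma sij_of_lt {i j : ℕ} (h : i + 1 < j) :
    sij s i j = s i * sij s (i+1) j * s i := by
  rw [sij]; rw [dif_pos h]

lemma eij_succ (i : ℕ) : eij s e i (i+1) = e i := by
  rw [eij]; simp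

lemma eij_of_lt {i j : ℕ} (h : i + 1 < j) :
    eij s e i j = sij s i (j-1) * e (j-1) * sij s i (j-1) := by
  rw [eij, if_pos h]

/-- rewrite a product of two leading factors under right-assoc normal form -/
lemma pre2 {a b a' b' x : A} (h : a * b = a' * b') : a * (b * x) = a' * (b' * x) := by
  rw [← mul_assoc, h, mul_assoc]

lemma pre3 {a b c a' b' c' x : A} (h : a * b * c = a' * b' * c') :
    a * (b * (c * x)) = a' * (b' * (c' * x)) := by
  rw [← mul_assoc, ← mul_assoc, h, mul_assoc, mul_assoc]

include hB

lemma s_comm' {m k : ℕ} (hm : 1 ≤ m) (hmn : m + 1 ≤ n) (hk : 1 ≤ k) (hkn : k + 1 ≤ n)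
    (h : m + 1 < k ∨ k + 1 < m) : s m * s k = s k * s m := by
  rcases h with h | h
  · exact hB.ss_comm m k hm hkn h
  · exact (hB.ss_comm k m hk hmn h).symm

lemma se_comm' {m k : ℕ} (hm : 1 ≤ m) (hmn : m + 1 ≤ n) (hk : 1 ≤ k) (hkn : k + 1 ≤ n)
    (h : m + 1 < k ∨ k + 1 < m) : s m * e k = e k * s m := by
  rcases h with h | h
  · exact hB.se_comm m k hm hkn h
  · exact hB.es_comm k m hk hmn h

theorem sij_sq (i j : ℕ) (h1 : 1 ≤ i) (h2 : i < j) (h3 : j ≤ n) :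
    sij s i j * sij s i j = 1 := by
  by_cases h : i + 1 < j
  · have ih := sij_sq (i+1) j (by omega) h (by omega)
    rw [sij_of_lt h]
    have hss := hB.ss i h1 (by omega)
    calc s i * sij s (i+1) j * s i * (s i * sij s (i+1) j * s i)
        = s i * sij s (i+1) j * (s i * s i) * sij s (i+1) j * s i := by
          simp only [mul_assoc]
      _ = 1 := by rw [hss, mul_one, mul_assoc _ _ (sij s (i+1) j), ih, mul_one, hss]
  · have : j = i + 1 := by omega
    subst this
    rw [sij_succ]; exact hB.ss i h1 (by omega)
termination_by j - i

/-- `e_{k,n} = s_k e_{k+1,n} s_k` for `k ≤ n-2`. -/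
lemma eij_top_step {k : ℕ} (hk : 1 ≤ k) (hkn : k + 2 ≤ n) :
    eij s e k n = s k * eij s e (k+1) n * s k := by
  obtain ⟨m, rfl⟩ : ∃ m, n = m + 1 := ⟨n - 1, by omega⟩
  have h1 : k + 1 < m + 1 := by omega
  rw [eij_of_lt h1]
  simp only [Nat.add_sub_cancel]
  by_cases h2 : k + 1 < m
  · -- general case
    rw [sij_of_lt h2]
    rw [eij_of_lt (by omega : k + 1 + 1 < m + 1)]
    simp only [Nat.add_sub_cancel]
    have hcom : s k * e m = e m * s k := se_comm' hB hk (by omega) (by omega) (by omega) (Or.inl h2)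
    have hss : s k * s k = 1 := hB.ss k hk (by omega)
    calc s k * sij s (k+1) m * s k * e m * (s k * sij s (k+1) m * s k)
        = s k * sij s (k+1) m * (s k * e m * s k) * sij s (k+1) m * s k := by
          simp only [mul_assoc]
      _ = s k * sij s (k+1) m * e m * sij s (k+1) m * s k := by
          rw [hcom, mul_assoc (e m), hss, mul_one]
      _ = s k * (sij s (k+1) m * e m * sij s (k+1) m) * s k := by
          simp only [mul_assoc]
  · -- k + 1 = m
    have : m = k + 1 := by omega
    subst this
    rw [sij_succ, eij]
    simp

end Rel
end BrauerFusion
namespace BrauerFusion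
section Rel2
variable {R : Type*} {A : Type*} [CommRing R] [Ring A] [Algebra R A]
variable {n : ℕ} {ω : R} {s e : ℕ → A} (hB : IsBrauer n ω s e)
include hB

/-- `s_m` commutes with `e_{k,n}` when `m ∉ {k-1, k}`. -/
theorem s_comm_eijn (m k : ℕ) (hm1 : 1 ≤ m) (hm2 : m + 2 ≤ n) (hk1 : 1 ≤ k)
    (hk2 : k + 1 ≤ n) (h1 : k ≠ m) (h2 : k ≠ m + 1) :
    s m * eij s e k n = eij s e k n * s m := by
  by_cases hc : k + 2 ≤ n
  · rw [eij_top_step hB hk1 hc]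
    by_cases hm : m = k + 1
    · subst hm
      have hc3 : k + 3 ≤ n := by omega
      rw [eij_top_step hB (by omega : 1 ≤ k + 1) hc3]
      have hbr : s k * s (k+1) * s k = s (k+1) * s k * s (k+1) := hB.braid k hk1 (by omega)
      have hbr' : s k * (s (k+1) * s k) = s (k+1) * (s k * s (k+1)) := by
        simpa only [mul_assoc] using hbr
      have hcom : s k * eij s e (k+2) n = eij s e (k+2) n * s k :=
        s_comm_eijn k (k+2) hk1 hc (by omega) (by omega) (by omega) (by omega)
      simp only [mul_assoc]
      rw [pre3 hbr.symm, pre2 hcom, hbr']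
    · have hsk : s m * s k = s k * s m :=
        s_comm' hB hm1 (by omega) hk1 (by omega) (by omega)
      have ih : s m * eij s e (k+1) n = eij s e (k+1) n * s m :=
        s_comm_eijn m (k+1) hm1 hm2 (by omega) hc (by omega) (by omega)
      simp only [mul_assoc]
      rw [pre2 hsk, pre2 ih, hsk]
  · have hkn : k + 1 = n := by omega
    have : ¬ (k + 1 < n) := by omega
    rw [eij, if_neg this]
    exact se_comm' hB hm1 (by omega) hk1 hk2 (by omega)
termination_by n - k

end Rel2
end BrauerFusion
namespace BrauerFusion
section Rel3
variable {R : Type*} {A : Type*} [CommRing R] [Ring A] [Algebra R A]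
variable {n : ℕ} {ω : R} {s e : ℕ → A} (hB : IsBrauer n ω s e)

lemma pre2one {a b x : A} (h : a * b = 1) : a * (b * x) = x := by
  rw [← mul_assoc, h, one_mul]

lemma pre3one {a b c d x : A} (h : a * b * c = d) : a * (b * (c * x)) = d * x := by
  rw [← mul_assoc, ← mul_assoc, h]

include hB

/-- conjugation of `e_{k,n}` by the generator `s_m`. -/
theorem sgen_conj (m k : ℕ) (hm1 : 1 ≤ m) (hm2 : m + 2 ≤ n) (hk1 : 1 ≤ k)
    (hk2 : k + 1 ≤ n) :
    s m * eij s e k n * s m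
      = eij s e (if k = m then m + 1 else if k = m + 1 then m else k) n := by
  have hss : s m * s m = 1 := hB.ss m hm1 (by omega)
  by_cases h1 : k = m
  · subst h1
    rw [if_pos rfl, eij_top_step hB hk1 hm2]
    simp only [mul_assoc]
    rw [pre2one hss, hss, mul_one]
  · rw [if_neg h1]
    by_cases h2 : k = m + 1
    · subst h2
      rw [if_pos rfl]
      exact (eij_top_step hB hm1 hm2).symm
    · rw [if_neg h2]
      rw [s_comm_eijn hB m k hm1 hm2 hk1 hk2 h1 h2, mul_assoc, hss, mul_one]

/-- conjugation of `e_{k,n}` by the transposition `s_{ij}`. -/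
theorem sij_conj (i j k : ℕ) (h1 : 1 ≤ i) (h2 : i < j) (h3 : j + 1 ≤ n)
    (hk1 : 1 ≤ k) (hk2 : k + 1 ≤ n) :
    sij s i j * eij s e k n * sij s i j
      = eij s e (if k = i then j else if k = j then i else k) n := by
  by_cases h : i + 1 < j
  · rw [sij_of_lt h]
    set k1 : ℕ := if k = i then i + 1 else if k = i + 1 then i else k with hk1def
    set k2 : ℕ := if k1 = i + 1 then j else if k1 = j then i + 1 else k1 with hk2def
    set k3 : ℕ := if k2 = i then i + 1 else if k2 = i + 1 then i else k2 with hk3def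
    have hb1 : 1 ≤ k1 ∧ k1 + 1 ≤ n := by rw [hk1def]; split_ifs <;> omega
    have hb2 : 1 ≤ k2 ∧ k2 + 1 ≤ n := by
      rw [hk2def, hk1def]; split_ifs <;> omega
    have g1 : s i * eij s e k n * s i = eij s e k1 n :=
      sgen_conj hB i k h1 (by omega) hk1 hk2
    have g2 : sij s (i+1) j * eij s e k1 n * sij s (i+1) j = eij s e k2 n :=
      sij_conj (i+1) j k1 (by omega) h h3 hb1.1 hb1.2
    have g3 : s i * eij s e k2 n * s i = eij s e k3 n :=
      sgen_conj hB i k2 h1 (by omega) hb2.1 hb2.2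
    have hfin : k3 = if k = i then j else if k = j then i else k := by
      rw [hk3def, hk2def, hk1def]; split_ifs <;> omega
    calc s i * sij s (i+1) j * s i * eij s e k n * (s i * sij s (i+1) j * s i)
        = s i * (sij s (i+1) j * ((s i * eij s e k n * s i) * sij s (i+1) j)) * s i := by
          simp only [mul_assoc]
      _ = s i * (sij s (i+1) j * eij s e k1 n * sij s (i+1) j) * s i := by
          rw [g1]; simp only [mul_assoc]
      _ = s i * eij s e k2 n * s i := by rw [g2]
      _ = eij s e k3 n := g3
      _ = _ := by rw [hfin]
  · have hj : j = i + 1 := by omega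
    subst hj
    rw [sij_succ]
    exact sgen_conj hB i k h1 (by omega) hk1 hk2
termination_by j - i

/-- `e_{i+1,n} s_i e_{i+1,n} = e_{i+1,n}`. -/
theorem eU (i : ℕ) (h1 : 1 ≤ i) (h2 : i + 2 ≤ n) :
    eij s e (i+1) n * s i * eij s e (i+1) n = eij s e (i+1) n := by
  by_cases hc : i + 3 ≤ n
  · rw [eij_top_step hB (by omega : 1 ≤ i + 1) (by omega : i + 1 + 2 ≤ n)]
    have hbr : s i * s (i+1) * s i = s (i+1) * s i * s (i+1) := hB.braid i h1 (by omega)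
    have hcom : s i * eij s e (i+2) n = eij s e (i+2) n * s i :=
      s_comm_eijn hB i (i+2) h1 h2 (by omega) (by omega) (by omega) (by omega)
    have ih : eij s e (i+2) n * s (i+1) * eij s e (i+2) n = eij s e (i+2) n :=
      eU (i+1) (by omega) hc
    have hss : s i * s i = 1 := hB.ss i h1 (by omega)
    simp only [mul_assoc]
    rw [pre3 hbr.symm, pre2 hcom, pre2 hcom.symm, pre3one ih, pre2 hcom.symm, pre2one hss]
  · have hn : ¬ (i + 1 + 1 < n) := by omega
    rw [eij, if_neg hn]
    have hees := hB.ees i h1 h2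
    rw [← hees, mul_assoc (e (i+1) * e i) (s (i+1)) (e (i+1)),
      hB.se (i+1) (by omega) (by omega), hB.eee₂ i h1 h2]
termination_by n - i

/-- `e_{j,n} s_{ij} e_{j,n} = e_{j,n}`. -/
theorem eW (i j : ℕ) (h1 : 1 ≤ i) (h2 : i < j) (h3 : j + 1 ≤ n) :
    eij s e j n * sij s i j * eij s e j n = eij s e j n := by
  by_cases h : i + 1 < j
  · rw [sij_of_lt h]
    have hcom : s i * eij s e j n = eij s e j n * s i :=
      s_comm_eijn hB i j h1 (by omega) (by omega) h3 (by omega) (by omega)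
    have ih : eij s e j n * sij s (i+1) j * eij s e j n = eij s e j n :=
      eW (i+1) j (by omega) h h3
    simp only [mul_assoc]
    rw [hcom, pre2 hcom.symm, pre3one ih, pre2 hcom, hB.ss i h1 (by omega), mul_one]
  · have hj : j = i + 1 := by omega
    subst hj
    rw [sij_succ]
    exact eU hB i h1 (by omega)
termination_by j - i

end Rel3
end BrauerFusion
namespace BrauerFusion
section Rel4
variable {A : Type*} [Ring A]

theorem local_swap {K : Type*} [CommRing K] [Algebra K A] (X Ei Ej : A)
    (hX : X * X = 1) (r1 : Ei * X = X * Ej) (r2 : X * Ei = Ej * X)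
    (r3 : Ei * Ej = X * Ej) (r4 : Ej * Ei = Ej * X)
    (x y z : K) (hxyz : x * y + z * x = z * y) :
    (1 - x • Ei) * (1 - y • Ej) * (1 - z • X)
      = (1 - z • X) * (1 - y • Ej) * (1 - x • Ei) := by
  have t7 : X * Ej * X = Ei := by
    rw [← r1, mul_assoc, hX, mul_one]
  have t6 : X * Ej * Ei = Ei := by
    rw [← r1, mul_assoc, r2, ← mul_assoc, r3, ← r1, mul_assoc, hX, mul_one]
  have hc : x * y + z * x - z * y = 0 := by rw [hxyz, sub_self]
  rw [← sub_eq_zero]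
  have expand : (1 - x • Ei) * (1 - y • Ej) * (1 - z • X)
      - (1 - z • X) * (1 - y • Ej) * (1 - x • Ei)
      = (x * y + z * x - z * y) • (X * Ej - Ej * X) := by
    simp only [mul_sub, sub_mul, mul_one, one_mul, smul_mul_assoc, mul_smul_comm, smul_smul]
    rw [r3, r1, r2, r4, t7, t6]
    module
  rw [expand, hc, zero_smul]

end Rel4
end BrauerFusion
namespace BrauerFusion
section Rel5
variable {R : Type*} {A : Type*} [CommRing R] [Ring A] [Algebra R A]
variable {n : ℕ} {ω : R} {s e : ℕ → A} (hB : IsBrauer n ω s e)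
include hB

theorem sij_comm_eijn (i j k : ℕ) (h1 : 1 ≤ i) (h2 : i < j) (h3 : j + 1 ≤ n)
    (hk1 : 1 ≤ k) (hk2 : k + 1 ≤ n) (hki : k ≠ i) (hkj : k ≠ j) :
    sij s i j * eij s e k n = eij s e k n * sij s i j := by
  have h := sij_conj hB i j k h1 h2 h3 hk1 hk2
  rw [if_neg hki, if_neg hkj] at h
  have hX := sij_sq hB i j h1 h2 (by omega)
  calc sij s i j * eij s e k n
      = sij s i j * eij s e k n * (sij s i j * sij s i j) := by rw [hX, mul_one]
    _ = (sij s i j * eij s e k n * sij s i j) * sij s i j := by simp only [mul_assoc]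
    _ = eij s e k n * sij s i j := by rw [h]

theorem rel_pack (i j : ℕ) (h1 : 1 ≤ i) (h2 : i < j) (h3 : j + 1 ≤ n) :
    eij s e i n * sij s i j = sij s i j * eij s e j n ∧
    sij s i j * eij s e i n = eij s e j n * sij s i j ∧
    eij s e i n * eij s e j n = sij s i j * eij s e j n ∧
    eij s e j n * eij s e i n = eij s e j n * sij s i j := by
  have hX : sij s i j * sij s i j = 1 := sij_sq hB i j h1 h2 (by omega)
  have hcj : sij s i j * eij s e j n * sij s i j = eij s e i n := by
    have h := sij_conj hB i j j h1 h2 h3 (by omega) h3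
    rwa [if_neg (by omega), if_pos rfl] at h
  have hci : sij s i j * eij s e i n * sij s i j = eij s e j n := by
    have h := sij_conj hB i j i h1 h2 h3 h1 (by omega)
    rwa [if_pos rfl] at h
  have hw : eij s e j n * sij s i j * eij s e j n = eij s e j n := eW hB i j h1 h2 h3
  refine ⟨?_, ?_, ?_, ?_⟩
  · rw [← hcj, mul_assoc (sij s i j * eij s e j n) (sij s i j) (sij s i j), hX, mul_one]
  · rw [← hci, mul_assoc (sij s i j * eij s e i n) (sij s i j) (sij s i j), hX, mul_one]
  · rw [← hcj, mul_assoc (sij s i j) (eij s e j n) (sij s i j),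
      mul_assoc (sij s i j) (eij s e j n * sij s i j) (eij s e j n), hw]
  · rw [← hcj, ← mul_assoc (eij s e j n) (sij s i j * eij s e j n) (sij s i j),
      ← mul_assoc (eij s e j n) (sij s i j) (eij s e j n), hw]

end Rel5
end BrauerFusion
namespace BrauerFusion
section Main
variable {K : Type*} {A : Type*} [Field K] [Ring A] [Algebra K A]
variable {n : ℕ} {ω : K} {s e : ℕ → A} (hB : IsBrauer n ω s e)
variable {u : ℕ → K}
  (hu : ∀ i j, 1 ≤ i → i < j → j ≤ n → u i + u j ≠ 0 ∧ u i ≠ u j)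

include hB

lemma commGF (i j k : ℕ) (h1 : 1 ≤ i) (h2 : i < j) (h3 : j + 1 ≤ n)
    (hk1 : 1 ≤ k) (hk2 : k + 1 ≤ n) (hki : k ≠ i) (hkj : k ≠ j) :
    Commute (1 - (u i - u j)⁻¹ • sij s i j) (1 - (u k + u n)⁻¹ • eij s e k n) := by
  have h : Commute (sij s i j) (eij s e k n) :=
    sij_comm_eijn hB i j k h1 h2 h3 hk1 hk2 hki hkj
  have c1 : Commute ((u i - u j)⁻¹ • sij s i j) ((u k + u n)⁻¹ • eij s e k n) :=
    (h.smul_left _).smul_right _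
  exact (Commute.one_left _).sub_left ((Commute.one_right _).sub_right c1)

include hu

lemma swapFFG (i j : ℕ) (h1 : 1 ≤ i) (h2 : i < j) (h3 : j + 1 ≤ n) :
    (1 - (u i + u n)⁻¹ • eij s e i n) * (1 - (u j + u n)⁻¹ • eij s e j n) *
        (1 - (u i - u j)⁻¹ • sij s i j)
      = (1 - (u i - u j)⁻¹ • sij s i j) * (1 - (u j + u n)⁻¹ • eij s e j n) *
        (1 - (u i + u n)⁻¹ • eij s e i n) := by
  obtain ⟨r1, r2, r3, r4⟩ := rel_pack hB i j h1 h2 h3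
  have hX := sij_sq hB i j h1 h2 (by omega)
  have hA : u i + u n ≠ 0 := (hu i n h1 (by omega) le_rfl).1
  have hBB : u j + u n ≠ 0 := (hu j n (by omega) (by omega) le_rfl).1
  have hC : u i - u j ≠ 0 := sub_ne_zero.mpr (hu i j h1 h2 (by omega)).2
  refine local_swap _ _ _ hX r1 r2 r3 r4 _ _ _ ?_
  field_simp
  ring

/-- moving one `F`-factor through a block of `G`-factors. -/
lemma step1 (i0 : ℕ) (h1 : 1 ≤ i0) : ∀ t, i0 + t + 1 ≤ n →
    ((1 - (u i0 + u n)⁻¹ • eij s e i0 n) *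
        ((List.range' (i0+1) t).map fun i => 1 - (u i + u n)⁻¹ • eij s e i n).prod) *
      ((List.range' (i0+1) t).map fun j => 1 - (u i0 - u j)⁻¹ • sij s i0 j).prod
    = ((List.range' (i0+1) t).map fun j => 1 - (u i0 - u j)⁻¹ • sij s i0 j).prod *
      (((List.range' (i0+1) t).map fun i => 1 - (u i + u n)⁻¹ • eij s e i n).prod *
        (1 - (u i0 + u n)⁻¹ • eij s e i0 n)) := by
  intro t
  induction t with
  | zero => simp
  | succ t ih =>
    intro ht
    have hih := ih (by omega)
    rw [List.range'_concat, List.map_append, List.map_append, List.prod_append,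
      List.prod_append]
    simp only [List.map_cons, List.map_nil, List.prod_cons, List.prod_nil, mul_one, one_mul]
    have hfg : Commute (1 - (u (i0 + 1 + t) + u n)⁻¹ • eij s e (i0 + 1 + t) n)
        (((List.range' (i0+1) t).map fun j => 1 - (u i0 - u j)⁻¹ • sij s i0 j).prod) := by
      apply Commute.list_prod_right
      intro x hx
      rw [List.mem_map] at hx
      obtain ⟨l, hl, rfl⟩ := hx
      rw [List.mem_range'_1] at hl
      exact (commGF hB i0 l (i0+1+t) h1 (by omega) (by omega) (by omega) (by omega)
        (by omega) (by omega)).symm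
    have hgp : Commute (1 - (u i0 - u (i0 + 1 + t))⁻¹ • sij s i0 (i0 + 1 + t))
        (((List.range' (i0+1) t).map fun i => 1 - (u i + u n)⁻¹ • eij s e i n).prod) := by
      apply Commute.list_prod_right
      intro x hx
      rw [List.mem_map] at hx
      obtain ⟨l, hl, rfl⟩ := hx
      rw [List.mem_range'_1] at hl
      exact commGF hB i0 (i0+1+t) l h1 (by omega) (by omega) (by omega) (by omega)
        (by omega) (by omega)
    have hswap := swapFFG hB hu i0 (i0+1+t) h1 (by omega) (by omega)
    have hswap' : (1 - (u i0 + u n)⁻¹ • eij s e i0 n) *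
        ((1 - (u (i0+1+t) + u n)⁻¹ • eij s e (i0+1+t) n) *
          (1 - (u i0 - u (i0+1+t))⁻¹ • sij s i0 (i0+1+t)))
        = (1 - (u i0 - u (i0+1+t))⁻¹ • sij s i0 (i0+1+t)) *
          ((1 - (u (i0+1+t) + u n)⁻¹ • eij s e (i0+1+t) n) *
            (1 - (u i0 + u n)⁻¹ • eij s e i0 n)) := by
      simpa only [mul_assoc] using hswap
    have hih2 : (1 - (u i0 + u n)⁻¹ • eij s e i0 n) *
        ((List.range' (i0+1) t).map fun i => 1 - (u i + u n)⁻¹ • eij s e i n).prod *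
        ((List.range' (i0+1) t).map fun j => 1 - (u i0 - u j)⁻¹ • sij s i0 j).prod
        = ((List.range' (i0+1) t).map fun j => 1 - (u i0 - u j)⁻¹ • sij s i0 j).prod *
          ((List.range' (i0+1) t).map fun i => 1 - (u i + u n)⁻¹ • eij s e i n).prod *
          (1 - (u i0 + u n)⁻¹ • eij s e i0 n) := by
      rw [hih, mul_assoc]
    simp only [mul_assoc]
    rw [pre2 hfg.eq, pre3 hih2, hswap', pre2 hgp.symm.eq]

end Main
end BrauerFusion
namespace BrauerFusion
section Main2
variable {K : Type*} {A : Type*} [Field K] [Ring A] [Algebra K A]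
variable {n : ℕ} {ω : K} {s e : ℕ → A} (hB : IsBrauer n ω s e)
variable {u : ℕ → K}
  (hu : ∀ i j, 1 ≤ i → i < j → j ≤ n → u i + u j ≠ 0 ∧ u i ≠ u j)

lemma filterRange (a : ℕ) : ∀ mm : ℕ,
    (List.range' 1 mm).filter (fun j => decide (a < j)) = List.range' (a+1) (mm - a) := by
  intro mm
  induction mm with
  | zero => simp
  | succ mm ih =>
    rw [List.range'_concat, List.filter_append, ih]
    by_cases h : a < 1 + 1 * mm
    · have h2 : mm + 1 - a = (mm - a) + 1 := by omega
      rw [h2, List.range'_concat]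
      simp only [List.filter_cons, List.filter_nil]
      rw [if_pos (by simpa using h)]
      congr 2
      omega
    · simp only [List.filter_cons, List.filter_nil]
      rw [if_neg (by simpa using h)]
      have h3 : mm - a = 0 := by omega
      have h4 : mm + 1 - a = 0 := by omega
      simp [h3, h4]

lemma lex_prod (mm : ℕ) :
    ((lexPairs mm).map fun p => 1 - (u p.1 - u p.2)⁻¹ • sij s p.1 p.2).prod
  = ((List.range' 1 mm).map fun i =>
      ((List.range' (i+1) (mm - i)).map fun j => 1 - (u i - u j)⁻¹ • sij s i j).prod).prod := by
  rw [lexPairs, List.map_flatMap, List.flatMap_def, List.prod_flatten, List.map_map]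
  congr 1
  apply List.map_congr_left
  intro i _
  simp only [Function.comp]
  rw [List.map_map, filterRange]
  rfl

include hB hu

lemma key : ∀ (d : ℕ) (i0 : ℕ), 1 ≤ i0 → i0 + d + 1 = n →
    ((List.range' i0 (d+1)).map fun i => 1 - (u i + u n)⁻¹ • eij s e i n).prod *
    ((List.range' i0 (d+1)).map fun i =>
       ((List.range' (i+1) (n-1-i)).map fun j => 1 - (u i - u j)⁻¹ • sij s i j).prod).prod
  = ((List.range' i0 (d+1)).map fun i =>
       ((List.range' (i+1) (n-1-i)).map fun j => 1 - (u i - u j)⁻¹ • sij s i j).prod).prod *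
    ((List.range' i0 (d+1)).reverse.map fun i => 1 - (u i + u n)⁻¹ • eij s e i n).prod := by
  intro d
  induction d with
  | zero =>
    intro i0 h1 h2
    have h0 : n - 1 - i0 = 0 := by omega
    simp [h0]
  | succ d ih =>
    intro i0 h1 h2
    rw [List.range'_succ, List.reverse_cons]
    simp only [List.map_cons, List.prod_cons, List.map_append, List.prod_append,
      List.map_nil, List.prod_nil, mul_one, one_mul]
    have hb : n - 1 - i0 = d + 1 := by omega
    rw [hb]
    have hs := step1 hB hu i0 h1 (d+1) (by omega)
    have hs2 : (1 - (u i0 + u n)⁻¹ • eij s e i0 n) *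
        ((List.range' (i0+1) (d+1)).map fun i => 1 - (u i + u n)⁻¹ • eij s e i n).prod *
        ((List.range' (i0+1) (d+1)).map fun j => 1 - (u i0 - u j)⁻¹ • sij s i0 j).prod
        = ((List.range' (i0+1) (d+1)).map fun j => 1 - (u i0 - u j)⁻¹ • sij s i0 j).prod *
          ((List.range' (i0+1) (d+1)).map fun i => 1 - (u i + u n)⁻¹ • eij s e i n).prod *
          (1 - (u i0 + u n)⁻¹ • eij s e i0 n) := hs.trans (mul_assoc _ _ _).symm
    have hcomm : Commute (1 - (u i0 + u n)⁻¹ • eij s e i0 n)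
        (((List.range' (i0+1) (d+1)).map fun i =>
          ((List.range' (i+1) (n-1-i)).map fun j =>
            1 - (u i - u j)⁻¹ • sij s i j).prod).prod) := by
      apply Commute.list_prod_right
      intro x hx
      rw [List.mem_map] at hx
      obtain ⟨i, hi, rfl⟩ := hx
      rw [List.mem_range'_1] at hi
      apply Commute.list_prod_right
      intro y hy
      rw [List.mem_map] at hy
      obtain ⟨j, hj, rfl⟩ := hy
      rw [List.mem_range'_1] at hj
      exact (commGF hB i j i0 (by omega) (by omega) (by omega) h1 (by omega)
        (by omega) (by omega)).symm
    have hih : ((List.range' (i0+1) (d+1)).map fun i =>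
          1 - (u i + u n)⁻¹ • eij s e i n).prod *
        ((List.range' (i0+1) (d+1)).map fun i =>
          ((List.range' (i+1) (n-1-i)).map fun j =>
            1 - (u i - u j)⁻¹ • sij s i j).prod).prod
        = ((List.range' (i0+1) (d+1)).map fun i =>
            ((List.range' (i+1) (n-1-i)).map fun j =>
              1 - (u i - u j)⁻¹ • sij s i j).prod).prod *
          ((List.range' (i0+1) (d+1)).reverse.map fun i =>
            1 - (u i + u n)⁻¹ • eij s e i n).prod := ih (i0+1) (by omega) (by omega)
    simp only [mul_assoc]
    rw [pre3 hs2, hcomm.eq, pre2 hih]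

end Main2
end BrauerFusion

namespace BrauerFusion

/-- **The commutation identity used in Lemma 3.3.**  For `n ≥ 2`, in
`B_n(ω) ⊗ F(u_1,…,u_n)`,
`(1 - e_{1,n}/(u_1+u_n)) ⋯ (1 - e_{n-1,n}/(u_{n-1}+u_n)) ∏_{1≤i<j≤n-1}(1 - s_{ij}/(u_i-u_j))
= ∏_{1≤i<j≤n-1}(1 - s_{ij}/(u_i-u_j)) (1 - e_{n-1,n}/(u_{n-1}+u_n)) ⋯ (1 - e_{1,n}/(u_1+u_n))`,
the products over pairs `(i,j)` taken in lexicographic order.  This is stated in any algebra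
over a field `K ⊇ ℂ(ω)` with elements `u_1,…,u_n` at which all the denominators are nonzero
(in particular for independent indeterminates `u_1,…,u_n`). -/
theorem e_factors_commute_past_s_product
    {K : Type*} [Field K] [Algebra F K] {A : Type*} [Ring A] [Algebra K A]
    (n : ℕ) (hn : 2 ≤ n) (s e : ℕ → A) (hB : IsBrauer n (algebraMap F K ωF) s e)
    (u : ℕ → K)
    (hu : ∀ i j, 1 ≤ i → i < j → j ≤ n → u i + u j ≠ 0 ∧ u i ≠ u j) :
    (((List.range' 1 (n-1)).map fun i =>
      1 - (u i + u n)⁻¹ • eij s e i n).prod) *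
    (((lexPairs (n-1)).map fun p => 1 - (u p.1 - u p.2)⁻¹ • sij s p.1 p.2).prod)
    =
    (((lexPairs (n-1)).map fun p => 1 - (u p.1 - u p.2)⁻¹ • sij s p.1 p.2).prod) *
    (((List.range' 1 (n-1)).reverse.map fun i =>
      1 - (u i + u n)⁻¹ • eij s e i n).prod) := by
  rw [lex_prod (u := u) (s := s) (n-1)]
  have hk := key hB hu (n-2) 1 le_rfl (by omega)
  rw [show n - 2 + 1 = n - 1 from by omega] at hk
  exact hk

end BrauerFusion
end
end

section
/- Let 1 < j < m ≤ n and set x_j^{(m)} = (ω−1)/2 + Σ_{r=1}^{j−1}(s_{rm} − e_{rm}) ∈ B_n(ω). Then x_j^{(m)} e_{jm} = (ω − 1 − x_j) e_{jm}, where x_j = (ω−1)/2 + Σ_{r=1}^{j−1}(s_{rj} − e_{rj}) is the Jucys–Murphy element. -/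
/-!
Common definitions for the fusion procedure for the Brauer algebra
(Isaev–Molev, "Fusion procedure for the Brauer algebra").
-/

noncomputable section
open scoped BigOperators
open Classical

namespace BrauerFusion

section Aux

variable {R : Type*} {A : Type*} [CommRing R] [Ring A] [Algebra R A]
variable {n : ℕ} {ω : R} {s e : ℕ → A}

lemma sij_base (s : ℕ → A) (i : ℕ) : sij s i (i+1) = s i := by
  rw [sij]; simp

lemma sij_step (s : ℕ → A) {i j : ℕ} (h : i + 1 < j) :
    sij s i j = s i * sij s (i+1) j * s i := by
  rw [sij, dif_pos h]

lemma eij_base (s e : ℕ → A) (i : ℕ) : eij s e i (i+1) = e i := by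
  simp [eij]

lemma eij_step (s e : ℕ → A) {i j : ℕ} (h : i + 1 < j) :
    eij s e i j = sij s i (j-1) * e (j-1) * sij s i (j-1) := by
  simp [eij, h]

lemma comm_reassoc {a b : A} (h : a * b = b * a) (x : A) : a * (b * x) = b * (a * x) := by
  rw [← mul_assoc, h, mul_assoc]

lemma se_succ (hB : IsBrauer n ω s e) {i : ℕ} (h1 : 1 ≤ i) (h2 : i + 2 ≤ n) :
    s i * e (i+1) = s (i+1) * (e i * e (i+1)) :=
  calc s i * e (i+1) = s i * (e (i+1) * e i * e (i+1)) := by rw [hB.eee₂ i h1 h2]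
    _ = (s i * e (i+1) * e i) * e (i+1) := by simp only [mul_assoc]
    _ = s (i+1) * (e i * e (i+1)) := by rw [hB.see i h1 h2, mul_assoc]

lemma ees_succ (hB : IsBrauer n ω s e) {i : ℕ} (h1 : 1 ≤ i) (h2 : i + 2 ≤ n) :
    e i * e (i+1) * s i = e i * s (i+1) :=
  calc e i * e (i+1) * s i = e i * (e (i+1) * s i) := by rw [mul_assoc]
    _ = e i * (e (i+1) * e i * s (i+1)) := by rw [hB.ees i h1 h2]
    _ = (e i * e (i+1) * e i) * s (i+1) := by simp only [mul_assoc]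
    _ = e i * s (i+1) := by rw [hB.eee₁ i h1 h2]

lemma ese_succ (hB : IsBrauer n ω s e) {i : ℕ} (h1 : 1 ≤ i) (h2 : i + 2 ≤ n) :
    e (i+1) * s i * e (i+1) = e (i+1) :=
  calc e (i+1) * s i * e (i+1) = (e (i+1) * e i * s (i+1)) * e (i+1) := by
        rw [hB.ees i h1 h2]
    _ = e (i+1) * e i * (s (i+1) * e (i+1)) := by rw [mul_assoc]
    _ = e (i+1) * e i * e (i+1) := by rw [hB.se (i+1) (by omega) (by omega)]
    _ = e (i+1) := hB.eee₂ i h1 h2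

lemma sse (hB : IsBrauer n ω s e) {i : ℕ} (h1 : 1 ≤ i) (h2 : i + 2 ≤ n) :
    s i * (s (i+1) * (s i * e (i+1))) = e i * e (i+1) := by
  rw [se_succ hB h1 h2, ← mul_assoc (s (i+1)) (s (i+1)), hB.ss (i+1) (by omega) h2,
    one_mul, ← mul_assoc, hB.se i h1 (by omega)]

lemma conj_succ (hB : IsBrauer n ω s e) {i : ℕ} (h1 : 1 ≤ i) (h2 : i + 2 ≤ n) :
    s i * e (i+1) * s i = s (i+1) * (e i * s (i+1)) :=
  calc s i * e (i+1) * s i = s (i+1) * (e i * e (i+1)) * s i := by rw [se_succ hB h1 h2]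
    _ = s (i+1) * (e i * e (i+1) * s i) := by simp only [mul_assoc]
    _ = s (i+1) * (e i * s (i+1)) := by rw [ees_succ hB h1 h2]

lemma s_comm_sij (hB : IsBrauer n ω s e) (i j m : ℕ) (h1 : 1 ≤ i) (h2 : m + 1 ≤ n)
    (hij : i < j) (hjm : j < m) : s m * sij s i j = sij s i j * s m := by
  by_cases h : i + 1 < j
  · rw [sij_step s h]
    have ih := s_comm_sij hB (i+1) j m (by omega) h2 h hjm
    have hc : s m * s i = s i * s m := (hB.ss_comm i m h1 h2 (by omega)).symm
    simp only [mul_assoc]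
    rw [comm_reassoc hc, comm_reassoc ih, hc]
  · have hj : j = i + 1 := by omega
    subst hj
    rw [sij_base]
    exact (hB.ss_comm i m h1 h2 (by omega)).symm
termination_by j - i
decreasing_by omega

lemma s_comm_eij (hB : IsBrauer n ω s e) (i j m : ℕ) (h1 : 1 ≤ i) (h2 : m + 1 ≤ n)
    (hij : i < j) (hjm : j < m) : s m * eij s e i j = eij s e i j * s m := by
  by_cases h : i + 1 < j
  · rw [eij_step s e h]
    have hs := s_comm_sij hB i (j-1) m h1 h2 (by omega) (by omega)
    have he := hB.es_comm (j-1) m (by omega) h2 (by omega)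
    simp only [mul_assoc]
    rw [comm_reassoc hs, comm_reassoc he, hs]
  · have hj : j = i + 1 := by omega
    subst hj
    rw [eij_base]
    exact hB.es_comm i m h1 h2 (by omega)

lemma sij_right (hB : IsBrauer n ω s e) (i j : ℕ) (h1 : 1 ≤ i) (h2 : j + 1 ≤ n)
    (hij : i < j) : sij s i (j+1) = s j * sij s i j * s j := by
  by_cases h : i + 1 < j
  · rw [sij_step s (show i + 1 < j + 1 by omega), sij_right hB (i+1) j (by omega) h2 h,
      sij_step s h]
    have hc := hB.ss_comm i j h1 h2 h
    simp only [mul_assoc]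
    rw [comm_reassoc hc, ← hc]
  · have hj : j = i + 1 := by omega
    subst hj
    rw [sij_step s (by omega), sij_base, sij_base]
    exact hB.braid i h1 h2
termination_by j - i
decreasing_by omega

lemma eij_left (hB : IsBrauer n ω s e) (i j : ℕ) (h1 : 1 ≤ i) (h2 : j ≤ n)
    (hij : i + 1 < j) : eij s e i j = s i * eij s e (i+1) j * s i := by
  by_cases h : i + 2 < j
  · rw [eij_step s e hij, eij_step s e (show i + 1 + 1 < j by omega),
      sij_step s (show i + 1 < j - 1 by omega)]
    have hce : s i * e (j-1) = e (j-1) * s i := hB.se_comm i (j-1) h1 (by omega) (by omega)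
    have hss : s i * s i = 1 := hB.ss i h1 (by omega)
    simp only [mul_assoc]
    rw [comm_reassoc hce, ← mul_assoc (s i) (s i), hss, one_mul]
  · have hj : j = i + 2 := by omega
    subst hj
    rw [eij_step s e hij]
    have h3 : i + 2 - 1 = i + 1 := by omega
    rw [h3, sij_base]
    have h4 : i + 2 = (i + 1) + 1 := rfl
    rw [h4, eij_base]

lemma eij_right (hB : IsBrauer n ω s e) (i j : ℕ) (h1 : 1 ≤ i) (h2 : j + 1 ≤ n)
    (hij : i < j) : eij s e i (j+1) = s j * eij s e i j * s j := by
  by_cases h : i + 1 < j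
  · rw [eij_left hB i (j+1) h1 (by omega) (by omega),
      eij_right hB (i+1) j (by omega) h2 h,
      eij_left hB i j h1 (by omega) h]
    have hc := hB.ss_comm i j h1 h2 h
    simp only [mul_assoc]
    rw [comm_reassoc hc, ← hc]
  · have hj : j = i + 1 := by omega
    subst hj
    have h4 : i + 1 + 1 = i + 2 := rfl
    rw [eij_base, h4, eij_step s e (by omega)]
    have h3 : i + 2 - 1 = i + 1 := by omega
    rw [h3, sij_base, conj_succ hB h1 h2, mul_assoc]
termination_by j - i
decreasing_by omega

lemma AB_base (hB : IsBrauer n ω s e) (r j : ℕ) (hr : 1 ≤ r) (hrj : r < j)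
    (hjn : j + 1 ≤ n) :
    sij s r (j+1) * e j = eij s e r j * e j ∧
    eij s e r (j+1) * e j = sij s r j * e j := by
  by_cases h : r + 1 < j
  · have ih := AB_base hB (r+1) j (by omega) h hjn
    have hce : s r * e j = e j * s r := hB.se_comm r j hr hjn (by omega)
    constructor
    · rw [sij_step s (show r + 1 < j + 1 by omega), eij_left hB r j hr (by omega) h]
      simp only [mul_assoc]
      rw [hce]
      have key : sij s (r+1) (j+1) * (e j * s r) = eij s e (r+1) j * (e j * s r) := by
        rw [← mul_assoc, ← mul_assoc, ih.1]
      rw [key]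
    · rw [eij_left hB r (j+1) hr (by omega) (by omega), sij_step s h]
      simp only [mul_assoc]
      rw [hce]
      have key : eij s e (r+1) (j+1) * (e j * s r) = sij s (r+1) j * (e j * s r) := by
        rw [← mul_assoc, ← mul_assoc, ih.2]
      rw [key]
  · have hj : j = r + 1 := by omega
    subst hj
    constructor
    · rw [eij_base, sij_step s (by omega), sij_base]
      simp only [mul_assoc]
      exact sse hB hr hjn
    · rw [sij_base, eij_step s e (show r + 1 < r + 1 + 1 by omega)]
      have h3 : r + 1 + 1 - 1 = r + 1 := by omega
      rw [h3, sij_base]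
      simp only [mul_assoc]
      rw [← mul_assoc (e (r+1)) (s r), ese_succ hB hr hjn]
termination_by j - r
decreasing_by omega

lemma AB (hB : IsBrauer n ω s e) (r j m : ℕ) (hr : 1 ≤ r) (hrj : r < j)
    (hjm : j < m) (hmn : m ≤ n) :
    sij s r m * eij s e j m = eij s e r j * eij s e j m ∧
    eij s e r m * eij s e j m = sij s r j * eij s e j m := by
  by_cases h : j + 1 < m
  · obtain ⟨m', rfl⟩ : ∃ m', m = m' + 1 := ⟨m - 1, by omega⟩
    have ih := AB hB r j m' hr hrj (by omega) (by omega)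
    have hsr : sij s r (m'+1) = s m' * sij s r m' * s m' :=
      sij_right hB r m' hr (by omega) (by omega)
    have her : eij s e j (m'+1) = s m' * eij s e j m' * s m' :=
      eij_right hB j m' (by omega) (by omega) (by omega)
    have herr : eij s e r (m'+1) = s m' * eij s e r m' * s m' :=
      eij_right hB r m' hr (by omega) (by omega)
    have hss : s m' * s m' = 1 := hB.ss m' (by omega) (by omega)
    have hcs : s m' * sij s r j = sij s r j * s m' :=
      s_comm_sij hB r j m' hr (by omega) hrj (by omega)
    have hce : s m' * eij s e r j = eij s e r j * s m' :=
      s_comm_eij hB r j m' hr (by omega) hrj (by omega)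
    constructor
    · calc sij s r (m'+1) * eij s e j (m'+1)
          = s m' * (sij s r m' * ((s m' * s m') * (eij s e j m' * s m'))) := by
            rw [hsr, her]; simp only [mul_assoc]
        _ = s m' * ((sij s r m' * eij s e j m') * s m') := by
            rw [hss, one_mul]; simp only [mul_assoc]
        _ = s m' * ((eij s e r j * eij s e j m') * s m') := by rw [ih.1]
        _ = (s m' * eij s e r j) * (eij s e j m' * s m') := by simp only [mul_assoc]
        _ = eij s e r j * eij s e j (m'+1) := by
            rw [hce, her]; simp only [mul_assoc]
    · calc eij s e r (m'+1) * eij s e j (m'+1)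
          = s m' * (eij s e r m' * ((s m' * s m') * (eij s e j m' * s m'))) := by
            rw [herr, her]; simp only [mul_assoc]
        _ = s m' * ((eij s e r m' * eij s e j m') * s m') := by
            rw [hss, one_mul]; simp only [mul_assoc]
        _ = s m' * ((sij s r j * eij s e j m') * s m') := by rw [ih.2]
        _ = (s m' * sij s r j) * (eij s e j m' * s m') := by simp only [mul_assoc]
        _ = sij s r j * eij s e j (m'+1) := by
            rw [hcs, her]; simp only [mul_assoc]
  · have hm : m = j + 1 := by omega
    subst hm
    have base := AB_base hB r j hr hrj hmn
    rw [eij_base]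
    exact base
termination_by m - j
decreasing_by omega

end Aux

/-- For `1 < j < m ≤ n`, with `x_j^{(m)} = (ω-1)/2 + ∑_{r=1}^{j-1}(s_{rm} - e_{rm})`,
one has `x_j^{(m)} e_{jm} = (ω - 1 - x_j) e_{jm}` in `B_n(ω)`, where `x_j` is the
Jucys–Murphy element.  This is stated in any algebra over `F = ℂ(ω)` whose elements
`s i`, `e i` satisfy the Brauer relations. -/
theorem jmM_ejm {A : Type*} [Ring A] [Algebra F A]
    (n j m : ℕ) (hj : 1 < j) (hjm : j < m) (hmn : m ≤ n)
    (s e : ℕ → A) (hB : IsBrauer n ωF s e) :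
    jmM ωF s e j m * eij s e j m
      = (algebraMap F A (ωF - 1) - jm ωF s e j) * eij s e j m := by
  have key : ∀ r ∈ Finset.Icc 1 (j-1),
      sij s r m * eij s e j m - eij s e r m * eij s e j m
        = -(sij s r j * eij s e j m - eij s e r j * eij s e j m) := by
    intro r hrm
    simp only [Finset.mem_Icc] at hrm
    have hab := AB hB r j m hrm.1 (by omega) hjm hmn
    rw [hab.1, hab.2, neg_sub]
  have h2 : algebraMap F A (ωF - 1)
      = algebraMap F A ((ωF - 1) / 2) + algebraMap F A ((ωF - 1) / 2) := by
    haveI : NeZero (2 : F) := ⟨by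
      rw [show (2 : F) = algebraMap (Polynomial ℂ) (RatFunc ℂ) 2 from (map_ofNat _ 2).symm]
      exact RatFunc.algebraMap_ne_zero (by norm_num)⟩
    rw [← map_add, add_halves]
  simp only [jmM, jm, h2, add_mul, sub_mul, Finset.sum_mul]
  rw [Finset.sum_congr rfl key]
  simp only [Finset.sum_neg_distrib]
  abel


end BrauerFusion
end
end

section
/- Let u and v be independent indeterminates, and for 1 ≤ a < b ≤ 3 and a nonzero rational expression w define R_{ab}(w) = 1 − s_{ab}/w + e_{ab}/(w − ω/2 + 1) in B_3(ω) ⊗_F F(u,v). Then the Yang–Baxter equation holds: R_{12}(u) · R_{13}(u+v) · R_{23}(v) = R_{23}(v) · R_{13}(u+v) · R_{12}(u). -/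
/-!
Common definitions for the fusion procedure for the Brauer algebra
(Isaev–Molev, "Fusion procedure for the Brauer algebra").
-/

noncomputable section
open scoped BigOperators
open Classical

namespace BrauerFusion

/-- The `R`-matrix `R_{ab}(w) = 1 - s_{ab}/w + e_{ab}/(w - ω/2 + 1)`. -/
def Rmat {K : Type*} [Field K] {A : Type*} [Ring A] [Algebra K A]
    (ω : K) (s e : ℕ → A) (a b : ℕ) (w : K) : A :=
  1 - w⁻¹ • sij s a b + (w - ω / 2 + 1)⁻¹ • eij s e a b

/-- **The Yang–Baxter equation** for the rational function
`R_{ab}(w) = 1 - s_{ab}/w + e_{ab}/(w - ω/2 + 1)` in `B_3(ω) ⊗ F(u,v)`: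
`R_{12}(u) R_{13}(u+v) R_{23}(v) = R_{23}(v) R_{13}(u+v) R_{12}(u)`.
This is stated in any algebra over a field `K ⊇ ℂ(ω)` and any `u, v ∈ K` at which all
the denominators are nonzero (in particular for independent indeterminates `u, v`). -/
theorem yang_baxter
    {K : Type*} [Field K] [Algebra F K] {A : Type*} [Ring A] [Algebra K A]
    (s e : ℕ → A) (hB : IsBrauer 3 (algebraMap F K ωF) s e)
    (u v : K) (hu : u ≠ 0) (hv : v ≠ 0) (huv : u + v ≠ 0)
    (hu' : u - algebraMap F K ωF / 2 + 1 ≠ 0)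
    (hv' : v - algebraMap F K ωF / 2 + 1 ≠ 0)
    (huv' : u + v - algebraMap F K ωF / 2 + 1 ≠ 0) :
    Rmat (algebraMap F K ωF) s e 1 2 u *
    Rmat (algebraMap F K ωF) s e 1 3 (u + v) *
    Rmat (algebraMap F K ωF) s e 2 3 v
    =
    Rmat (algebraMap F K ωF) s e 2 3 v *
    Rmat (algebraMap F K ωF) s e 1 3 (u + v) *
    Rmat (algebraMap F K ωF) s e 1 2 u := by

  set x : K := algebraMap F K ωF with hx
  -- core Brauer relations for n = 3
  have ss1 : s 1 * s 1 = 1 := hB.ss 1 le_rfl (by norm_num)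
  have ss2 : s 2 * s 2 = 1 := hB.ss 2 (by norm_num) (by norm_num)
  have ee1 : e 1 * e 1 = x • e 1 := hB.ee 1 le_rfl (by norm_num)
  have ee2 : e 2 * e 2 = x • e 2 := hB.ee 2 (by norm_num) (by norm_num)
  have se1 : s 1 * e 1 = e 1 := hB.se 1 le_rfl (by norm_num)
  have se2 : s 2 * e 2 = e 2 := hB.se 2 (by norm_num) (by norm_num)
  have es1 : e 1 * s 1 = e 1 := hB.es 1 le_rfl (by norm_num)
  have es2 : e 2 * s 2 = e 2 := hB.es 2 (by norm_num) (by norm_num)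
  have braid : s 1 * s 2 * s 1 = s 2 * s 1 * s 2 := by
    have h := hB.braid 1 le_rfl (by norm_num); norm_num at h; exact h
  have eee1 : e 1 * e 2 * e 1 = e 1 := by
    have h := hB.eee₁ 1 le_rfl (by norm_num); norm_num at h; exact h
  have eee2 : e 2 * e 1 * e 2 = e 2 := by
    have h := hB.eee₂ 1 le_rfl (by norm_num); norm_num at h; exact h
  have see : s 1 * e 2 * e 1 = s 2 * e 1 := by
    have h := hB.see 1 le_rfl (by norm_num); norm_num at h; exact h
  have ees : e 2 * e 1 * s 2 = e 2 * s 1 := by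
    have h := hB.ees 1 le_rfl (by norm_num); norm_num at h; exact h
  have A3 : ∀ a b c X : A, a * (b * (c * X)) = (a * b * c) * X := fun a b c X => by
    rw [mul_assoc, mul_assoc]
  -- rewrite rules in right-associated trailing form
  have r1 : ∀ X : A, s 1 * (s 1 * X) = X := fun X => by rw [← mul_assoc, ss1, one_mul]
  have r2 : ∀ X : A, s 2 * (s 2 * X) = X := fun X => by rw [← mul_assoc, ss2, one_mul]
  have r3 : ∀ X : A, s 1 * (e 1 * X) = e 1 * X := fun X => by rw [← mul_assoc, se1]
  have r4 : ∀ X : A, e 1 * (s 1 * X) = e 1 * X := fun X => by rw [← mul_assoc, es1]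
  have r5 : ∀ X : A, s 2 * (e 2 * X) = e 2 * X := fun X => by rw [← mul_assoc, se2]
  have r6 : ∀ X : A, e 2 * (s 2 * X) = e 2 * X := fun X => by rw [← mul_assoc, es2]
  have r7 : ∀ X : A, e 1 * (e 1 * X) = x • (e 1 * X) := fun X => by
    rw [← mul_assoc, ee1, smul_mul_assoc]
  have r8 : ∀ X : A, e 2 * (e 2 * X) = x • (e 2 * X) := fun X => by
    rw [← mul_assoc, ee2, smul_mul_assoc]
  have r9 : ∀ X : A, s 2 * (s 1 * (s 2 * X)) = s 1 * (s 2 * (s 1 * X)) := fun X => by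
    rw [A3, A3, braid]
  have r10 : ∀ X : A, e 1 * (e 2 * (e 1 * X)) = e 1 * X := fun X => by rw [A3, eee1]
  have r11 : ∀ X : A, e 2 * (e 1 * (e 2 * X)) = e 2 * X := fun X => by rw [A3, eee2]
  have r12 : ∀ X : A, s 1 * (e 2 * (e 1 * X)) = s 2 * (e 1 * X) := fun X => by
    rw [A3, see, mul_assoc]
  have r13 : ∀ X : A, e 2 * (e 1 * (s 2 * X)) = e 2 * (s 1 * X) := fun X => by
    rw [A3, ees, mul_assoc]
  have r14 : ∀ X : A, e 1 * (e 2 * (s 1 * X)) = e 1 * (s 2 * X) := fun X =>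
    ((congrArg (fun y => e 1 * y) (r13 X)).symm).trans (r10 (s 2 * X))
  have r15 : ∀ X : A, s 2 * (e 1 * (e 2 * X)) = s 1 * (e 2 * X) := fun X =>
    (r12 (e 2 * X)).symm.trans (congrArg (fun y => s 1 * y) (r11 X))
  have r16 : ∀ X : A, e 1 * (s 2 * (e 1 * X)) = e 1 * X := fun X => by
    rw [← r14 (e 1 * X), r3, r10]
  have r17 : ∀ X : A, e 2 * (s 1 * (e 2 * X)) = e 2 * X := fun X => by
    rw [← r13 (e 2 * X), r5, r11]
  have r18 : ∀ X : A, s 2 * (s 1 * (e 2 * X)) = e 1 * (e 2 * X) := fun X => by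
    conv_lhs => rw [← r11 X]
    rw [r12, r2]
  have r19 : ∀ X : A, s 1 * (s 2 * (e 1 * X)) = e 2 * (e 1 * X) := fun X => by
    conv_lhs => rw [← r12 X]
    rw [r1]
  have r20 : ∀ X : A, e 2 * (s 1 * (s 2 * X)) = e 2 * (e 1 * X) := fun X => by
    have h := (r13 (s 2 * X)).symm
    rwa [r2] at h
  have r21 : ∀ X : A, e 1 * (s 2 * (s 1 * X)) = e 1 * (e 2 * X) := fun X => by
    have h := (r14 (s 1 * X)).symm
    rwa [r1] at h
  have r22 : ∀ X : A, s 2 * (e 1 * (s 2 * X)) = s 1 * (e 2 * (s 1 * X)) := fun X => by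
    have h := (r12 (s 2 * X)).symm
    rwa [r13] at h
  haveI : CharZero F := charZero_of_injective_algebraMap (algebraMap ℂ (RatFunc ℂ)).injective
  haveI : CharZero K := charZero_of_injective_algebraMap (algebraMap F K).injective
  have hx2 : x = x / 2 + x / 2 := (add_halves x).symm
  have ee1' : e 1 * e 1 = (x / 2 + x / 2) • e 1 := ee1.trans (by rw [← hx2])
  have ee2' : e 2 * e 2 = (x / 2 + x / 2) • e 2 := ee2.trans (by rw [← hx2])
  have r7' : ∀ X : A, e 1 * (e 1 * X) = (x / 2 + x / 2) • (e 1 * X) := fun X =>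
    (r7 X).trans (by rw [← hx2])
  have r8' : ∀ X : A, e 2 * (e 2 * X) = (x / 2 + x / 2) • (e 2 * X) := fun X =>
    (r8 X).trans (by rw [← hx2])
  -- standalone versions
  have r9s : s 2 * (s 1 * s 2) = s 1 * (s 2 * s 1) := by simpa using r9 1
  have r10s : e 1 * (e 2 * e 1) = e 1 := by simpa using r10 1
  have r11s : e 2 * (e 1 * e 2) = e 2 := by simpa using r11 1
  have r12s : s 1 * (e 2 * e 1) = s 2 * e 1 := by simpa using r12 1
  have r13s : e 2 * (e 1 * s 2) = e 2 * s 1 := by simpa using r13 1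
  have r14s : e 1 * (e 2 * s 1) = e 1 * s 2 := by simpa using r14 1
  have r15s : s 2 * (e 1 * e 2) = s 1 * e 2 := by simpa using r15 1
  have r16s : e 1 * (s 2 * e 1) = e 1 := by simpa using r16 1
  have r17s : e 2 * (s 1 * e 2) = e 2 := by simpa using r17 1
  have r18s : s 2 * (s 1 * e 2) = e 1 * e 2 := by simpa using r18 1
  have r19s : s 1 * (s 2 * e 1) = e 2 * e 1 := by simpa using r19 1
  have r20s : e 2 * (s 1 * s 2) = e 2 * e 1 := by simpa using r20 1
  have r21s : e 1 * (s 2 * s 1) = e 1 * e 2 := by simpa using r21 1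
  have r22s : s 2 * (e 1 * s 2) = s 1 * (e 2 * s 1) := by simpa using r22 1
  -- the generators sij / eij
  have hs12 : sij s 1 2 = s 1 := by rw [sij]; norm_num
  have hs23 : sij s 2 3 = s 2 := by rw [sij]; norm_num
  have hs13 : sij s 1 3 = s 1 * s 2 * s 1 := by rw [sij]; norm_num [hs23]
  have he12 : eij s e 1 2 = e 1 := by simp [eij]
  have he23 : eij s e 2 3 = e 2 := by simp [eij]
  have he13 : eij s e 1 3 = s 1 * e 2 * s 1 := by simp [eij, hs12]
  -- clearing denominators
  have key : ∀ p q : K, p ≠ 0 → q ≠ 0 → ∀ S E : A,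
      (q * p) • ((1 : A) - p⁻¹ • S + q⁻¹ • E) = (q * p) • (1 : A) - q • S + p • E := by
    intro p q hp hq S E
    have h1 : q * p * p⁻¹ = q := mul_inv_cancel_right₀ hp q
    have h2 : q * p * q⁻¹ = p := by rw [mul_comm q p]; exact mul_inv_cancel_right₀ hq p
    rw [smul_add, smul_sub, smul_smul, smul_smul, h1, h2]
  have expand : ∀ (p q r : K) (X Y Z : A),
      (p * (q * r)) • (X * Y * Z) = ((p • X) * (q • Y)) * (r • Z) := by
    intro p q r X Y Z
    simp only [smul_mul_assoc, mul_smul_comm, smul_smul]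
    module
  have expand2 : ∀ (p q r : K) (X Y Z : A),
      (p * (q * r)) • (X * Y * Z) = ((r • X) * (q • Y)) * (p • Z) := by
    intro p q r X Y Z
    simp only [smul_mul_assoc, mul_smul_comm, smul_smul]
    try module
  set Q : K := ((u - x / 2 + 1) * u) *
    (((u + v - x / 2 + 1) * (u + v)) * ((v - x / 2 + 1) * v)) with hQdef
  have hQ : Q ≠ 0 :=
    mul_ne_zero (mul_ne_zero hu' hu)
      (mul_ne_zero (mul_ne_zero huv' huv) (mul_ne_zero hv' hv))
  have cancel : ∀ X Y : A, Q • X = Q • Y → X = Y := by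
    intro X Y h
    have h2 := congrArg (fun z : A => Q⁻¹ • z) h
    simpa [smul_smul, inv_mul_cancel₀ hQ] using h2
  apply cancel
  simp only [Rmat, hs12, hs13, hs23, he12, he13, he23]
  rw [hQdef]
  rw [expand, expand2]
  rw [key u (u - x / 2 + 1) hu hu' (s 1) (e 1),
    key (u + v) (u + v - x / 2 + 1) huv huv' (s 1 * s 2 * s 1) (s 1 * e 2 * s 1),
    key v (v - x / 2 + 1) hv hv' (s 2) (e 2)]
  simp only [mul_add, add_mul, mul_sub, sub_mul, smul_mul_assoc, mul_smul_comm, smul_smul,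
    one_mul, mul_one, mul_assoc, r1, r2, r3, r4, r5, r6, r7', r8', r9, r10, r11, r12, r13, r14,
    r15, r16, r17, r18, r19, r20, r21, r22, ss1, ss2, se1, se2, es1, es2, ee1', ee2',
    r9s, r10s, r11s, r12s, r13s, r14s, r15s, r16s, r17s, r18s, r19s, r20s, r21s, r22s]
  module

end BrauerFusion
end
end
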